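/- Let (X, d) be a metric space equipped with a Borel probability measure γ, let x_1, …, x_n ∈ X, let ε > 0, and let U_1, …, U_n be pairwise disjoint measurable sets covering X with γ(U_i) = 1/n and U_i ⊆ {x ∈ X : d(x, x_i) ≤ ε} for each i. For a vector v = (v(x_1), …, v(x_n)) ∈ ℝ^n define the piecewise constant interpolation P*v := Σ_{i=1}^n v(x_i) 1_{U_i}. Then for every h > 2ε: ∬_{{(x,y) : d(x,y) < h − 2ε}} |P*v(x) − P*v(y)|² dγ(x) dγ(y) ≤ (1/n²) Σ_{i=1}^n Σ_{j=1}^n 1{d(x_i,x_j) < h} |v(x_i) − v(x_j)|². -/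

import Mathlib

open MeasureTheory

theorem stmt_11 {X : Type*} [MetricSpace X] [MeasurableSpace X] [BorelSpace X]
    (γ : Measure X) [IsProbabilityMeasure γ]
    (n : ℕ) (x : Fin n → X) (ε : ℝ) (hε : 0 < ε)
    (U : Fin n → Set X) (hUmeas : ∀ i, MeasurableSet (U i))
    (hUdisj : Pairwise (Function.onFun Disjoint U))
    (hUcover : (⋃ i, U i) = Set.univ)
    (hUmass : ∀ i, γ (U i) = 1 / n)
    (hUball : ∀ i, U i ⊆ Metric.closedBall (x i) ε)
    (v : Fin n → ℝ) (h : ℝ) (hh : 2 * ε < h) :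
    ∫ a, ∫ b in {b | dist a b < h - 2 * ε},
        ((∑ i, Set.indicator (U i) (fun _ => v i) a)
          - (∑ i, Set.indicator (U i) (fun _ => v i) b)) ^ 2 ∂γ ∂γ
      ≤ (1 / (n : ℝ) ^ 2) * ∑ i, ∑ j,
          (if dist (x i) (x j) < h then (1 : ℝ) else 0) * (v i - v j) ^ 2 := by
  classical
  -- n > 0
  have hn : 0 < n := by
    by_contra h0
    push_neg at h0
    interval_cases n
    have : (⋃ i : Fin 0, U i) = (∅ : Set X) := by simp
    rw [this] at hUcover
    have h1 : γ Set.univ = 1 := measure_univ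
    rw [← hUcover] at h1
    simp at h1
  have hnR : (0:ℝ) < n := by exact_mod_cast hn
  set g : X → ℝ := fun b => ∑ i, (U i).indicator (fun _ => v i) b with hg
  have hmem : ∀ a : X, ∃ i, a ∈ U i := by
    intro a
    have : a ∈ ⋃ i, U i := hUcover ▸ Set.mem_univ a
    simpa using this
  have hgU : ∀ i, ∀ a ∈ U i, g a = v i := by
    intro i a ha
    rw [hg]
    simp only
    rw [Finset.sum_eq_single i]
    · simp [Set.indicator_of_mem ha]
    · intro j _ hj
      exact Set.indicator_of_notMem (Set.disjoint_right.mp (hUdisj hj) ha) _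
    · simp
  set χ : Fin n → Fin n → ℝ := fun i j => if dist (x i) (x j) < h then (1:ℝ) else 0 with hχ
  have hχnonneg : ∀ i j, 0 ≤ χ i j := by intro i j; rw [hχ]; positivity
  set D : Fin n → ℝ := fun i => ∑ j, χ i j * (v i - v j)^2 with hD
  have hDnonneg : ∀ i, 0 ≤ D i := by
    intro i; apply Finset.sum_nonneg; intro j _; positivity
  have hmassR : ∀ j, (γ (U j)).toReal = 1 / n := by
    intro j
    rw [hUmass j, ENNReal.toReal_div]
    simp
  -- inner bound
  have hinner : ∀ i, ∀ a ∈ U i,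
      (∫ b in {b | dist a b < h - 2 * ε}, (g a - g b)^2 ∂γ) ≤ (1/n) * D i := by
    intro i a ha
    have hSmeas : MeasurableSet {b | dist a b < h - 2 * ε} := by
      have : {b | dist a b < h - 2 * ε} = Metric.ball a (h - 2 * ε) := by
        ext b; simp [Metric.mem_ball, dist_comm]
      rw [this]; exact measurableSet_ball
    set H : X → ℝ := fun b => ∑ j, (U j).indicator (fun _ => χ i j * (v i - v j)^2) b with hH
    have hHint : Integrable H γ :=
      integrable_finset_sum _ fun j _ => (integrable_const _).indicator (hUmeas j)
    have hHU : ∀ j, ∀ b ∈ U j, H b = χ i j * (v i - v j)^2 := by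
      intro j b hb
      rw [hH]
      simp only
      rw [Finset.sum_eq_single j]
      · simp [Set.indicator_of_mem hb]
      · intro k _ hk
        exact Set.indicator_of_notMem (Set.disjoint_right.mp (hUdisj hk) hb) _
      · simp
    have hle : ∀ b, ({b | dist a b < h - 2 * ε}).indicator (fun b => (g a - g b)^2) b ≤ H b := by
      intro b
      by_cases hb : b ∈ {b | dist a b < h - 2 * ε}
      · rw [Set.indicator_of_mem hb]
        obtain ⟨j, hbj⟩ := hmem b
        rw [hgU i a ha, hgU j b hbj, hHU j b hbj]
        have hd : dist (x i) (x j) < h := by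
          have h1 : dist a (x i) ≤ ε := Metric.mem_closedBall.mp (hUball i ha)
          have h2 : dist b (x j) ≤ ε := Metric.mem_closedBall.mp (hUball j hbj)
          have h3 : dist a b < h - 2 * ε := hb
          have t1 : dist (x i) (x j) ≤ dist (x i) a + dist a (x j) := dist_triangle _ _ _
          have t2 : dist a (x j) ≤ dist a b + dist b (x j) := dist_triangle _ _ _
          have h1' : dist (x i) a ≤ ε := by rwa [dist_comm]
          linarith
        rw [hχ]
        simp [hd]
      · rw [Set.indicator_of_notMem hb]
        apply Finset.sum_nonneg
        intro j _
        apply Set.indicator_nonneg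
        intro _ _
        positivity
    have h1 : (∫ b in {b | dist a b < h - 2 * ε}, (g a - g b)^2 ∂γ) ≤ ∫ b, H b ∂γ := by
      rw [← integral_indicator hSmeas]
      refine integral_mono_of_nonneg ?_ hHint (Filter.Eventually.of_forall hle)
      refine Filter.Eventually.of_forall fun b => ?_
      apply Set.indicator_nonneg
      intro _ _; positivity
    refine h1.trans_eq ?_
    rw [hH]
    rw [integral_finset_sum _ fun j _ => (integrable_const _).indicator (hUmeas j)]
    have : ∀ j : Fin n, (∫ b, (U j).indicator (fun _ => χ i j * (v i - v j)^2) b ∂γ)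
        = (1/n) * (χ i j * (v i - v j)^2) := by
      intro j
      rw [integral_indicator (hUmeas j), setIntegral_const, measureReal_def, hmassR j, smul_eq_mul]
    rw [Finset.sum_congr rfl fun j _ => this j, hD]
    rw [Finset.mul_sum]
  -- outer bound
  set G : X → ℝ := fun a => ∑ i, (U i).indicator (fun _ => (1/n) * D i) a with hG
  have hGint : Integrable G γ :=
    integrable_finset_sum _ fun i _ => (integrable_const _).indicator (hUmeas i)
  have houter : ∀ a, (∫ b in {b | dist a b < h - 2 * ε}, (g a - g b)^2 ∂γ) ≤ G a := by
    intro a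
    obtain ⟨i, hai⟩ := hmem a
    have hGa : G a = (1/n) * D i := by
      rw [hG]
      simp only
      rw [Finset.sum_eq_single i]
      · simp [Set.indicator_of_mem hai]
      · intro k _ hk
        exact Set.indicator_of_notMem (Set.disjoint_right.mp (hUdisj hk) hai) _
      · simp
    rw [hGa]
    exact hinner i a hai
  have hmain : (∫ a, ∫ b in {b | dist a b < h - 2 * ε}, (g a - g b)^2 ∂γ ∂γ) ≤ ∫ a, G a ∂γ := by
    refine integral_mono_of_nonneg ?_ hGint (Filter.Eventually.of_forall houter)
    refine Filter.Eventually.of_forall fun a => ?_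
    apply integral_nonneg
    intro b; positivity
  have hGval : (∫ a, G a ∂γ) = (1 / (n:ℝ)^2) * ∑ i, D i := by
    rw [hG]
    rw [integral_finset_sum _ fun i _ => (integrable_const _).indicator (hUmeas i)]
    have : ∀ i : Fin n, (∫ a, (U i).indicator (fun _ => (1/n) * D i) a ∂γ)
        = (1/n) * ((1/n) * D i) := by
      intro i
      rw [integral_indicator (hUmeas i), setIntegral_const, measureReal_def, hmassR i, smul_eq_mul]
    rw [Finset.sum_congr rfl fun i _ => this i]
    simp_rw [← mul_assoc]
    rw [← Finset.mul_sum]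
    congr 1
    ring
  calc (∫ a, ∫ b in {b | dist a b < h - 2 * ε}, (g a - g b)^2 ∂γ ∂γ)
      ≤ ∫ a, G a ∂γ := hmain
    _ = (1 / (n:ℝ)^2) * ∑ i, D i := hGval
    _ = (1 / (n : ℝ) ^ 2) * ∑ i, ∑ j,
          (if dist (x i) (x j) < h then (1 : ℝ) else 0) * (v i - v j) ^ 2 := by
        rw [hD, hχ]
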